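/- arXiv:2505.08518 — 2 statements merged into one kernel-verified Lean document; each statement's English description precedes it below -/
import Mathlib

section
/- Let A, E, B, d > 0, α_i, α_{i+1} > 0, and c > 1. Then the cubic equation [2(B+d)α_i α_{i+1}] β³ + [2(B+d)(A α_i + E α_{i+1}) − 2c α_i α_{i+1}] β² + [(1−2c)(A α_i + E α_{i+1}) + 2(B+d) A E] β + 2(1−c) A E = 0 has exactly one positive real root. -/
/-- The cubic from the SPP-SBL β-update has exactly one positive real root. -/
theorem cubic_unique_positive_root
    (A E B d αi αi1 c : ℝ)
    (hA : 0 < A) (hE : 0 < E) (hB : 0 < B) (hd : 0 < d)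
    (hαi : 0 < αi) (hαi1 : 0 < αi1) (hc : 1 < c) :
    ∃! β : ℝ, 0 < β ∧
      (2*(B+d)*αi*αi1) * β^3
        + (2*(B+d)*(A*αi + E*αi1) - 2*c*αi*αi1) * β^2
        + ((1-2*c)*(A*αi + E*αi1) + 2*(B+d)*A*E) * β
        + 2*(1-c)*A*E = 0 := by
  set D := B + d with hD
  have hDpos : 0 < D := by positivity
  set f : ℝ → ℝ := fun β => (c-1)/β - D + (αi1/(A+β*αi1) + αi/(E+β*αi))/2 with hf
  -- polynomial equals -(2β(A+βαi1)(E+βαi)) * f β for β > 0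
  have hfactor : ∀ β : ℝ, 0 < β →
      (2*(B+d)*αi*αi1) * β^3
        + (2*(B+d)*(A*αi + E*αi1) - 2*c*αi*αi1) * β^2
        + ((1-2*c)*(A*αi + E*αi1) + 2*(B+d)*A*E) * β
        + 2*(1-c)*A*E = -(2*β*(A+β*αi1)*(E+β*αi)) * f β := by
    intro β hβ
    have h1 : A + β*αi1 > 0 := by positivity
    have h2 : E + β*αi > 0 := by positivity
    simp only [hf, hD]
    field_simp
    ring
  have hequiv : ∀ β : ℝ, 0 < β →
      ((2*(B+d)*αi*αi1) * β^3
        + (2*(B+d)*(A*αi + E*αi1) - 2*c*αi*αi1) * β^2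
        + ((1-2*c)*(A*αi + E*αi1) + 2*(B+d)*A*E) * β
        + 2*(1-c)*A*E = 0 ↔ f β = 0) := by
    intro β hβ
    rw [hfactor β hβ]
    have h1 : A + β*αi1 > 0 := by positivity
    have h2 : E + β*αi > 0 := by positivity
    constructor
    · intro h
      have hne : -(2*β*(A+β*αi1)*(E+β*αi)) ≠ 0 := by
        have : 0 < 2*β*(A+β*αi1)*(E+β*αi) := by positivity
        intro h'; linarith [neg_eq_zero.mp h']
      exact (mul_eq_zero.mp h).resolve_left hne
    · intro h; rw [h, mul_zero]
  -- strict monotonicity (decreasing)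
  have hmono : ∀ x y : ℝ, 0 < x → x < y → f y < f x := by
    intro x y hx hxy
    have hy : 0 < y := lt_trans hx hxy
    have h1 : (c-1)/y < (c-1)/x := div_lt_div_of_pos_left (by linarith) hx hxy
    have h2 : αi1/(A+y*αi1) ≤ αi1/(A+x*αi1) := by
      gcongr <;> nlinarith
    have h3 : αi/(E+y*αi) ≤ αi/(E+x*αi) := by
      gcongr <;> nlinarith
    simp only [hf]
    linarith
  -- endpoints
  set β0 : ℝ := (c-1)/(2*D) with hβ0def
  set β1 : ℝ := 2*c/D with hβ1def
  have hβ0 : 0 < β0 := div_pos (by linarith) (by positivity)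
  have hβ1 : 0 < β1 := div_pos (by linarith) hDpos
  have hβ01 : β0 < β1 := by
    rw [hβ0def, hβ1def, div_lt_div_iff₀ (by positivity) hDpos]
    nlinarith
  have hfβ0 : 0 < f β0 := by
    have h1 : (c-1)/β0 = 2*D := by
      rw [hβ0def]; field_simp
      exact div_self (by linarith)
    have h2 : 0 < αi1/(A+β0*αi1) := by positivity
    have h3 : 0 < αi/(E+β0*αi) := by positivity
    simp only [hf]
    rw [h1]
    linarith
  have hfβ1 : f β1 < 0 := by
    have h1 : (c-1)/β1 < c/β1 := by
      apply div_lt_div_of_pos_right (by linarith) hβ1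
    have hc1 : c/β1 = D/2 := by
      rw [hβ1def]; field_simp
    have h2 : αi1/(A+β1*αi1) < 1/β1 := by
      rw [div_lt_div_iff₀ (by positivity) hβ1]
      nlinarith
    have h3 : αi/(E+β1*αi) < 1/β1 := by
      rw [div_lt_div_iff₀ (by positivity) hβ1]
      nlinarith
    have h4 : 1/β1 = D/(2*c) := by
      rw [hβ1def]; field_simp
    have h5 : D/(2*c) < D/2 := by
      apply div_lt_div_of_pos_left hDpos (by norm_num) (by linarith)
    simp only [hf]
    rw [h4] at h2 h3
    rw [hc1] at h1
    linarith
  -- continuity on [β0, β1]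
  have hcont : ContinuousOn f (Set.Icc β0 β1) := by
    apply ContinuousOn.add
    · apply ContinuousOn.sub _ continuousOn_const
      exact ContinuousOn.div continuousOn_const continuousOn_id
        (fun x hx => ne_of_gt (lt_of_lt_of_le hβ0 hx.1))
    · apply ContinuousOn.div_const
      apply ContinuousOn.add
      · exact ContinuousOn.div continuousOn_const
          ((continuous_const.add (continuous_id.mul continuous_const)) : Continuous _).continuousOn
          (fun x hx => by have := lt_of_lt_of_le hβ0 hx.1; positivity)
      · exact ContinuousOn.div continuousOn_const
          ((continuous_const.add (continuous_id.mul continuous_const)) : Continuous _).continuousOn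
          (fun x hx => by have := lt_of_lt_of_le hβ0 hx.1; positivity)
  -- IVT
  have h0mem : (0:ℝ) ∈ Set.Icc (f β1) (f β0) := ⟨le_of_lt hfβ1, le_of_lt hfβ0⟩
  obtain ⟨β, hβmem, hβroot⟩ := intermediate_value_Icc' (le_of_lt hβ01) hcont h0mem
  have hβpos : 0 < β := lt_of_lt_of_le hβ0 hβmem.1
  refine ⟨β, ⟨hβpos, (hequiv β hβpos).mpr hβroot⟩, ?_⟩
  rintro y ⟨hy, hyroot⟩
  have hyf : f y = 0 := (hequiv y hy).mp hyroot
  by_contra hne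
  rcases lt_or_gt_of_ne hne with h | h
  · have := hmono y β hy h
    rw [hyf, hβroot] at this; exact lt_irrefl 0 this
  · have := hmono β y hβpos h
    rw [hyf, hβroot] at this; exact lt_irrefl 0 this
end

section
/- Let A, E, B, d, α_i, α_{i+1} > 0 and c > 1, and let β* be the unique positive real root of (c−1)/β − d + (1/2)[α_{i+1}/(A + β α_{i+1}) + α_i/(E + β α_i)] − B = 0. Then 0 < β* < c/d. -/
/-- The unique positive root β* of the SPP-SBL stationarity equation satisfies 0 < β* < c/d. -/
theorem root_upper_bound
    (A E B d αi αi1 c βs : ℝ)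
    (hA : 0 < A) (hE : 0 < E) (hB : 0 < B) (hd : 0 < d)
    (hαi : 0 < αi) (hαi1 : 0 < αi1) (hc : 1 < c)
    (hβs : 0 < βs)
    (hroot : (c-1)/βs - d + (1/2) * (αi1/(A + βs*αi1) + αi/(E + βs*αi)) - B = 0)
    (huniq : ∀ β : ℝ, 0 < β →
      (c-1)/β - d + (1/2) * (αi1/(A + β*αi1) + αi/(E + β*αi)) - B = 0 → β = βs) :
    0 < βs ∧ βs < c/d := by
  refine ⟨hβs, ?_⟩
  have hA1 : (0:ℝ) < A + βs*αi1 := by positivity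
  have hE1 : (0:ℝ) < E + βs*αi := by positivity
  have h1 : αi1/(A + βs*αi1) < 1/βs := by
    rw [div_lt_div_iff₀ hA1 hβs]
    nlinarith
  have h2 : αi/(E + βs*αi) < 1/βs := by
    rw [div_lt_div_iff₀ hE1 hβs]
    nlinarith
  have hd' : d < c/βs := by
    have : d + B = (c-1)/βs + (1/2) * (αi1/(A + βs*αi1) + αi/(E + βs*αi)) := by
      linarith
    have hlt : (c-1)/βs + (1/2) * (αi1/(A + βs*αi1) + αi/(E + βs*αi)) < c/βs := by
      have : (c-1)/βs + 1/βs = c/βs := by field_simp; ring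
      linarith
    linarith
  rw [lt_div_iff₀ hd]
  have h3 := mul_lt_mul_of_pos_right hd' hβs
  rw [div_mul_cancel₀ _ hβs.ne'] at h3
  linarith
end
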